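/- Regularization property of IRMGL under the discrepancy principle: Assume C > 0 and C₀ := η − ν₀(℘ + ν₁) − η₀η₁ > 0. Let (δ_j) be positive reals with δ_j → 0, let v_j ∈ V satisfy ‖v_j − v‖ ≤ δ_j, and let initial points u₀^{(j)} ∈ U satisfy u₀^{(j)} → u₀ with ‖u₀ − u†‖ ≤ ℘ and ‖u₀^{(j)} − u†‖ ≤ ℘ for all j. Let (u_k^{(j)})_k be the IRMGL iterates with data v_j started at u₀^{(j)}, and let k_j := min{k ≥ 0 : ‖Au_k^{(j)} − v_j‖ ≤ τδ_j} be the discrepancy stopping index. Then there exists a solution û ∈ U of Aû = v such that u_{k_j}^{(j)} → û as j → ∞. -/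

import Mathlib

open scoped BigOperators RealInnerProductSpace Classical
open ContinuousLinearMap Filter

noncomputable section

/-- Weight matrix induced by a signal `x` on the image graph. -/
def wMat {n : ℕ} (g : Fin n → Fin n → ℝ) (σ : ℝ) (x : EuclideanSpace ℝ (Fin n)) :
    Matrix (Fin n) (Fin n) ℝ :=
  Matrix.of fun a b => g a b * Real.exp (-(x a - x b) ^ 2 / σ)

/-- Degree function of the graph induced by `x`. -/
def degFun {n : ℕ} (g : Fin n → Fin n → ℝ) (σ : ℝ) (x : EuclideanSpace ℝ (Fin n))
    (a : Fin n) : ℝ :=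
  ∑ b, wMat g σ x a b

/-- Graph Laplacian matrix `Δ_x = D_x − W_x`. -/
def lapMat {n : ℕ} (g : Fin n → Fin n → ℝ) (σ : ℝ) (x : EuclideanSpace ℝ (Fin n)) :
    Matrix (Fin n) (Fin n) ℝ :=
  Matrix.diagonal (degFun g σ x) - wMat g σ x

/-- Graph Laplacian as a continuous linear map on Euclidean space. -/
def lapCLM {n : ℕ} (g : Fin n → Fin n → ℝ) (σ : ℝ) (x : EuclideanSpace ℝ (Fin n)) :
    EuclideanSpace ℝ (Fin n) →L[ℝ] EuclideanSpace ℝ (Fin n) :=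
  LinearMap.toContinuousLinearMap (Matrix.toEuclideanLin (lapMat g σ x))

/-- Adaptive step size `α_w(u)`. -/
def alphaStep {n m : ℕ} (A : EuclideanSpace ℝ (Fin n) →L[ℝ] EuclideanSpace ℝ (Fin m))
    (η₀ η₁ : ℝ) (w : EuclideanSpace ℝ (Fin m)) (u : EuclideanSpace ℝ (Fin n)) : ℝ :=
  if adjoint A (A u - w) ≠ 0 then
    min (η₀ * ‖A u - w‖ ^ 2 / ‖adjoint A (A u - w)‖ ^ 2) η₁
  else η₁

/-- Adaptive weight `β_w(u)`. -/
def betaStep {n m : ℕ} (g : Fin n → Fin n → ℝ) (σ : ℝ)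
    (A : EuclideanSpace ℝ (Fin n) →L[ℝ] EuclideanSpace ℝ (Fin m))
    (ν₀ ν₁ ν₂ : ℝ) (w : EuclideanSpace ℝ (Fin m)) (u : EuclideanSpace ℝ (Fin n)) : ℝ :=
  if lapCLM g σ u u ≠ 0 then
    min (min (ν₀ * ‖A u - w‖ ^ 2 / ‖lapCLM g σ u u‖) (ν₁ / ‖lapCLM g σ u u‖)) ν₂
  else 0

/-- One step of the IRMGL iteration with data `w`. -/
def irmglStep {n m : ℕ} (g : Fin n → Fin n → ℝ) (σ : ℝ)
    (A : EuclideanSpace ℝ (Fin n) →L[ℝ] EuclideanSpace ℝ (Fin m))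
    (η₀ η₁ ν₀ ν₁ ν₂ : ℝ) (w : EuclideanSpace ℝ (Fin m))
    (u : EuclideanSpace ℝ (Fin n)) : EuclideanSpace ℝ (Fin n) :=
  u - alphaStep A η₀ η₁ w u • adjoint A (A u - w)
    - betaStep g σ A ν₀ ν₁ ν₂ w u • lapCLM g σ u u

/-- The IRMGL iterates with data `w` started at `u₀`. -/
def irmglSeq {n m : ℕ} (g : Fin n → Fin n → ℝ) (σ : ℝ)
    (A : EuclideanSpace ℝ (Fin n) →L[ℝ] EuclideanSpace ℝ (Fin m))
    (η₀ η₁ ν₀ ν₁ ν₂ : ℝ) (w : EuclideanSpace ℝ (Fin m))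
    (u₀ : EuclideanSpace ℝ (Fin n)) : ℕ → EuclideanSpace ℝ (Fin n)
  | 0 => u₀
  | k + 1 => irmglStep g σ A η₀ η₁ ν₀ ν₁ ν₂ w
      (irmglSeq g σ A η₀ η₁ ν₀ ν₁ ν₂ w u₀ k)

end

noncomputable section
namespace Stmt12Aux
open ContinuousLinearMap Filter
open scoped RealInnerProductSpace

variable {n m : ℕ} {g : Fin n → Fin n → ℝ} {σ : ℝ}
  {A : EuclideanSpace ℝ (Fin n) →L[ℝ] EuclideanSpace ℝ (Fin m)}
  {η₀ η₁ ν₀ ν₁ ν₂ η τ p C C₀ : ℝ} {v : EuclideanSpace ℝ (Fin m)}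

lemma norm_adj_le (r : EuclideanSpace ℝ (Fin m)) : ‖adjoint A r‖ ≤ ‖A‖ * ‖r‖ := by
  simpa [LinearIsometryEquiv.norm_map adjoint A] using (adjoint A).le_opNorm r

lemma alpha_nonneg (hη₀ : 0 < η₀) (hη₁ : 0 < η₁) (w u) : 0 ≤ alphaStep A η₀ η₁ w u := by
  unfold alphaStep; split_ifs
  · exact le_min (by positivity) hη₁.le
  · exact hη₁.le

lemma alpha_le (hη₁ : 0 < η₁) (w u) : alphaStep A η₀ η₁ w u ≤ η₁ := by
  unfold alphaStep; split_ifs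
  · exact min_le_right _ _
  · exact le_rfl

lemma alpha_ge (hη₀ : 0 < η₀) (hηpos : 0 < η) (hηA : η * ‖A‖ ^ 2 ≤ η₀) (hηle : η ≤ η₁)
    (w u) : η ≤ alphaStep A η₀ η₁ w u := by
  unfold alphaStep; split_ifs with h
  · refine le_min ?_ hηle
    have ha : 0 < ‖adjoint A (A u - w)‖ := norm_pos_iff.2 h
    rw [le_div_iff₀ (by positivity)]
    have h1 : ‖adjoint A (A u - w)‖ ≤ ‖A‖ * ‖A u - w‖ := norm_adj_le _
    have h2 : ‖adjoint A (A u - w)‖ ^ 2 ≤ (‖A‖ * ‖A u - w‖) ^ 2 :=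
      pow_le_pow_left₀ (norm_nonneg _) h1 2
    have h3 : η * ‖adjoint A (A u - w)‖ ^ 2 ≤ η * (‖A‖ * ‖A u - w‖) ^ 2 :=
      mul_le_mul_of_nonneg_left h2 hηpos.le
    have h4 : (η * ‖A‖ ^ 2) * ‖A u - w‖ ^ 2 ≤ η₀ * ‖A u - w‖ ^ 2 :=
      mul_le_mul_of_nonneg_right hηA (sq_nonneg _)
    nlinarith [h3, h4]
  · exact hηle

lemma alpha_mul_le (hη₀ : 0 < η₀) (hη₁ : 0 < η₁) (w u) :
    alphaStep A η₀ η₁ w u * ‖adjoint A (A u - w)‖ ^ 2 ≤ η₀ * ‖A u - w‖ ^ 2 := by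
  unfold alphaStep; split_ifs with h
  · have ha : 0 < ‖adjoint A (A u - w)‖ ^ 2 := pow_pos (norm_pos_iff.2 h) 2
    calc min (η₀ * ‖A u - w‖ ^ 2 / ‖adjoint A (A u - w)‖ ^ 2) η₁ * ‖adjoint A (A u - w)‖ ^ 2
        ≤ (η₀ * ‖A u - w‖ ^ 2 / ‖adjoint A (A u - w)‖ ^ 2) * ‖adjoint A (A u - w)‖ ^ 2 :=
          mul_le_mul_of_nonneg_right (min_le_left _ _) ha.le
      _ = η₀ * ‖A u - w‖ ^ 2 := div_mul_cancel₀ _ ha.ne'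
  · simp only [not_not] at h
    rw [h, norm_zero]
    have : (0:ℝ) ^ 2 = 0 := by norm_num
    rw [this, mul_zero]
    positivity

lemma beta_nonneg (hν₀ : 0 < ν₀) (hν₁ : 0 < ν₁) (hν₂ : 0 < ν₂) (w u) :
    0 ≤ betaStep g σ A ν₀ ν₁ ν₂ w u := by
  unfold betaStep; split_ifs with h
  · have : 0 < ‖lapCLM g σ u u‖ := norm_pos_iff.2 h
    exact le_min (le_min (by positivity) (by positivity)) hν₂.le
  · exact le_rfl

lemma beta_le (hν₀ : 0 < ν₀) (hν₁ : 0 < ν₁) (hν₂ : 0 < ν₂) (w u) :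
    betaStep g σ A ν₀ ν₁ ν₂ w u ≤ ν₂ := by
  unfold betaStep; split_ifs
  · exact min_le_right _ _
  · exact hν₂.le

lemma beta_mul_le₀ (hν₀ : 0 < ν₀) (hν₁ : 0 < ν₁) (hν₂ : 0 < ν₂) (w u) :
    betaStep g σ A ν₀ ν₁ ν₂ w u * ‖lapCLM g σ u u‖ ≤ ν₀ * ‖A u - w‖ ^ 2 := by
  unfold betaStep; split_ifs with h
  · have hb : 0 < ‖lapCLM g σ u u‖ := norm_pos_iff.2 h
    calc min (min (ν₀ * ‖A u - w‖ ^ 2 / ‖lapCLM g σ u u‖) (ν₁ / ‖lapCLM g σ u u‖)) ν₂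
          * ‖lapCLM g σ u u‖
        ≤ (ν₀ * ‖A u - w‖ ^ 2 / ‖lapCLM g σ u u‖) * ‖lapCLM g σ u u‖ :=
          mul_le_mul_of_nonneg_right ((min_le_left _ _).trans (min_le_left _ _)) hb.le
      _ = ν₀ * ‖A u - w‖ ^ 2 := div_mul_cancel₀ _ hb.ne'
  · simp only [zero_mul]
    positivity

lemma beta_mul_le₁ (hν₀ : 0 < ν₀) (hν₁ : 0 < ν₁) (hν₂ : 0 < ν₂) (w u) :
    betaStep g σ A ν₀ ν₁ ν₂ w u * ‖lapCLM g σ u u‖ ≤ ν₁ := by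
  unfold betaStep; split_ifs with h
  · have hb : 0 < ‖lapCLM g σ u u‖ := norm_pos_iff.2 h
    calc min (min (ν₀ * ‖A u - w‖ ^ 2 / ‖lapCLM g σ u u‖) (ν₁ / ‖lapCLM g σ u u‖)) ν₂
          * ‖lapCLM g σ u u‖
        ≤ (ν₁ / ‖lapCLM g σ u u‖) * ‖lapCLM g σ u u‖ :=
          mul_le_mul_of_nonneg_right ((min_le_left _ _).trans (min_le_right _ _)) hb.le
      _ = ν₁ := div_mul_cancel₀ _ hb.ne'
  · simp only [zero_mul]; exact hν₁.le


set_option maxHeartbeats 1000000 in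
/-- Master one-step estimate. -/
lemma step_master (hη₀ : 0 < η₀) (hη₁ : 0 < η₁) (hν₀ : 0 < ν₀) (hν₁ : 0 < ν₁) (hν₂ : 0 < ν₂)
    (hηpos : 0 < η) (hηA : η * ‖A‖ ^ 2 ≤ η₀) (hηle : η ≤ η₁)
    {z : EuclideanSpace ℝ (Fin n)} (hz : A z = v)
    (w : EuclideanSpace ℝ (Fin m)) (u : EuclideanSpace ℝ (Fin n))
    {δ' : ℝ} (hδ' : 0 ≤ δ') (hw : ‖w - v‖ ≤ δ') :
    ‖irmglStep g σ A η₀ η₁ ν₀ ν₁ ν₂ w u - z‖ ^ 2 ≤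
      ‖u - z‖ ^ 2 - 2 * η * ‖A u - w‖ ^ 2 + 2 * η₁ * (δ' * ‖A u - w‖)
        + 2 * ν₀ * ‖u - z‖ * ‖A u - w‖ ^ 2 + 2 * (η₀ * η₁ + ν₀ * ν₁) * ‖A u - w‖ ^ 2 := by
  set α := alphaStep A η₀ η₁ w u with hαdef
  set β := betaStep g σ A ν₀ ν₁ ν₂ w u with hβdef
  set a := adjoint A (A u - w) with hadef
  set b := lapCLM g σ u u with hbdef
  set r := A u - w with hrdef
  have hα0 : 0 ≤ α := alpha_nonneg hη₀ hη₁ w u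
  have hα1 : η ≤ α := alpha_ge hη₀ hηpos hηA hηle w u
  have hα2 : α ≤ η₁ := alpha_le hη₁ w u
  have hαa : α * ‖a‖ ^ 2 ≤ η₀ * ‖r‖ ^ 2 := alpha_mul_le hη₀ hη₁ w u
  have hβ0 : 0 ≤ β := beta_nonneg hν₀ hν₁ hν₂ w u
  have hβb0 : β * ‖b‖ ≤ ν₀ * ‖r‖ ^ 2 := beta_mul_le₀ hν₀ hν₁ hν₂ w u
  have hβb1 : β * ‖b‖ ≤ ν₁ := beta_mul_le₁ hν₀ hν₁ hν₂ w u
  have hexp : irmglStep g σ A η₀ η₁ ν₀ ν₁ ν₂ w u - z = (u - z) - (α • a + β • b) := by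
    simp only [irmglStep, ← hαdef, ← hβdef, ← hadef, ← hbdef, ← hrdef]
    abel
  have hsq : ‖irmglStep g σ A η₀ η₁ ν₀ ν₁ ν₂ w u - z‖ ^ 2 =
      ‖u - z‖ ^ 2 - 2 * ⟪u - z, α • a + β • b⟫ + ‖α • a + β • b‖ ^ 2 := by
    rw [hexp, norm_sub_sq_real]
  have hAuz : A (u - z) = r + (w - v) := by
    rw [map_sub, hz, hrdef]; abel
  have hia : ⟪u - z, a⟫ = ‖r‖ ^ 2 + ⟪r, w - v⟫ := by
    rw [real_inner_comm, hadef, adjoint_inner_left, hAuz, inner_add_right,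
      real_inner_self_eq_norm_sq]
  have hinner : ⟪u - z, α • a + β • b⟫ = α * (‖r‖ ^ 2 + ⟪r, w - v⟫) + β * ⟪u - z, b⟫ := by
    rw [inner_add_right, real_inner_smul_right, real_inner_smul_right, hia]
  have h1 : |⟪r, w - v⟫| ≤ ‖r‖ * δ' :=
    (abs_real_inner_le_norm _ _).trans
      (mul_le_mul_of_nonneg_left hw (norm_nonneg _))
  have h2 : |⟪u - z, b⟫| ≤ ‖u - z‖ * ‖b‖ := abs_real_inner_le_norm _ _
  have hn2 : ‖α • a + β • b‖ ^ 2 ≤ 2 * (α * (α * ‖a‖ ^ 2)) + 2 * ((β * ‖b‖) * (β * ‖b‖)) := by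
    have h3 : ‖α • a + β • b‖ ≤ α * ‖a‖ + β * ‖b‖ := by
      refine (norm_add_le _ _).trans ?_
      rw [norm_smul, norm_smul, Real.norm_eq_abs, Real.norm_eq_abs,
        abs_of_nonneg hα0, abs_of_nonneg hβ0]
    have h5 : ‖α • a + β • b‖ ^ 2 ≤ (α * ‖a‖ + β * ‖b‖) ^ 2 :=
      pow_le_pow_left₀ (norm_nonneg _) h3 2
    nlinarith [h5, sq_nonneg (α * ‖a‖ - β * ‖b‖)]
  -- individual estimates
  have e1 : η * ‖r‖ ^ 2 - η₁ * (δ' * ‖r‖) ≤ α * (‖r‖ ^ 2 + ⟪r, w - v⟫) := by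
    have p1 : α * ⟪r, w - v⟫ ≥ -(η₁ * (δ' * ‖r‖)) := by
      have := neg_abs_le (⟪r, w - v⟫)
      nlinarith [mul_le_mul hα2 h1 (abs_nonneg _) hη₁.le, hα0,
        mul_le_mul_of_nonneg_left (neg_abs_le (⟪r, w - v⟫)) hα0]
    nlinarith [mul_le_mul_of_nonneg_right hα1 (sq_nonneg ‖r‖)]
  have e2 : -(ν₀ * ‖r‖ ^ 2 * ‖u - z‖) ≤ β * ⟪u - z, b⟫ := by
    nlinarith [mul_le_mul_of_nonneg_left (neg_abs_le (⟪u - z, b⟫)) hβ0,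
      mul_le_mul_of_nonneg_right hβb0 (norm_nonneg (u - z)),
      mul_le_mul_of_nonneg_left h2 hβ0]
  have e3 : 2 * (α * (α * ‖a‖ ^ 2)) ≤ 2 * (η₁ * (η₀ * ‖r‖ ^ 2)) := by
    have : α * (α * ‖a‖ ^ 2) ≤ η₁ * (η₀ * ‖r‖ ^ 2) := by
      have hnn : 0 ≤ α * ‖a‖ ^ 2 := mul_nonneg hα0 (sq_nonneg _)
      calc α * (α * ‖a‖ ^ 2) ≤ η₁ * (α * ‖a‖ ^ 2) := mul_le_mul_of_nonneg_right hα2 hnn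
        _ ≤ η₁ * (η₀ * ‖r‖ ^ 2) := mul_le_mul_of_nonneg_left hαa hη₁.le
    linarith
  have e4 : 2 * ((β * ‖b‖) * (β * ‖b‖)) ≤ 2 * (ν₁ * (ν₀ * ‖r‖ ^ 2)) := by
    have hnn : 0 ≤ β * ‖b‖ := mul_nonneg hβ0 (norm_nonneg _)
    nlinarith [mul_le_mul hβb1 hβb0 hnn hν₁.le]
  rw [hsq, hinner]
  nlinarith [e1, e2, e3, e4, hn2]


/-- Noisy one-step monotonicity under the discrepancy condition. -/
lemma step_mono (hη₀ : 0 < η₀) (hη₁ : 0 < η₁) (hν₀ : 0 < ν₀) (hν₁ : 0 < ν₁) (hν₂ : 0 < ν₂)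
    (hηpos : 0 < η) (hηA : η * ‖A‖ ^ 2 ≤ η₀) (hηle : η ≤ η₁) (hτ : 1 < τ) (hp : 0 < p)
    (hCdef : C = η - η₁ / τ - ν₀ * (p + ν₁) - η₀ * η₁) (hC : 0 < C)
    {z : EuclideanSpace ℝ (Fin n)} (hz : A z = v)
    {w : EuclideanSpace ℝ (Fin m)} {u : EuclideanSpace ℝ (Fin n)}
    {δ' : ℝ} (hδ' : 0 ≤ δ') (hw : ‖w - v‖ ≤ δ') (hdisc : τ * δ' ≤ ‖A u - w‖)
    (hu : ‖u - z‖ ≤ p) :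
    ‖irmglStep g σ A η₀ η₁ ν₀ ν₁ ν₂ w u - z‖ ≤ ‖u - z‖ := by
  have hm := step_master (g := g) (σ := σ) hη₀ hη₁ hν₀ hν₁ hν₂ hηpos hηA hηle hz w u hδ' hw
  have hτ0 : 0 < τ := lt_trans one_pos hτ
  have hr0 : 0 ≤ ‖A u - w‖ := norm_nonneg _
  have hδr : δ' * ‖A u - w‖ ≤ ‖A u - w‖ ^ 2 / τ := by
    rw [le_div_iff₀ hτ0]
    nlinarith
  have key : ‖irmglStep g σ A η₀ η₁ ν₀ ν₁ ν₂ w u - z‖ ^ 2 ≤ ‖u - z‖ ^ 2 := by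
    have h2 : 2 * η₁ * (δ' * ‖A u - w‖) ≤ 2 * (η₁ / τ) * ‖A u - w‖ ^ 2 := by
      rw [div_eq_mul_inv]
      have := mul_le_mul_of_nonneg_left hδr (by positivity : (0:ℝ) ≤ 2 * η₁)
      calc 2 * η₁ * (δ' * ‖A u - w‖) ≤ 2 * η₁ * (‖A u - w‖ ^ 2 / τ) := this
        _ = 2 * (η₁ * τ⁻¹) * ‖A u - w‖ ^ 2 := by rw [div_eq_mul_inv]; ring
    have h3 : 2 * ν₀ * (‖u - z‖ * ‖A u - w‖ ^ 2) ≤ 2 * ν₀ * (p * ‖A u - w‖ ^ 2) :=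
      mul_le_mul_of_nonneg_left
        (mul_le_mul_of_nonneg_right hu (sq_nonneg _)) (by positivity)
    nlinarith [sq_nonneg ‖A u - w‖, hm, h3]
  exact le_of_pow_le_pow_left₀ two_ne_zero (norm_nonneg (u - z)) key

/-- Exact-data one-step decrease. -/
lemma step_exact (hη₀ : 0 < η₀) (hη₁ : 0 < η₁) (hν₀ : 0 < ν₀) (hν₁ : 0 < ν₁) (hν₂ : 0 < ν₂)
    (hηpos : 0 < η) (hηA : η * ‖A‖ ^ 2 ≤ η₀) (hηle : η ≤ η₁) (hp : 0 < p)
    (hC₀def : C₀ = η - ν₀ * (p + ν₁) - η₀ * η₁)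
    {z : EuclideanSpace ℝ (Fin n)} (hz : A z = v)
    {u : EuclideanSpace ℝ (Fin n)} (hu : ‖u - z‖ ≤ p) :
    ‖irmglStep g σ A η₀ η₁ ν₀ ν₁ ν₂ v u - z‖ ^ 2 + 2 * C₀ * ‖A u - v‖ ^ 2 ≤ ‖u - z‖ ^ 2 := by
  have hm := step_master (g := g) (σ := σ) hη₀ hη₁ hν₀ hν₁ hν₂ hηpos hηA hηle hz v u
    le_rfl (by simp)
  have h3 : 2 * ν₀ * (‖u - z‖ * ‖A u - v‖ ^ 2) ≤ 2 * ν₀ * (p * ‖A u - v‖ ^ 2) :=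
    mul_le_mul_of_nonneg_left
      (mul_le_mul_of_nonneg_right hu (sq_nonneg _)) (by positivity)
  nlinarith [hm, h3]

/-- Crude one-step growth estimate with exact data. -/
lemma step_crude (hη₀ : 0 < η₀) (hη₁ : 0 < η₁) (hν₀ : 0 < ν₀) (hν₁ : 0 < ν₁) (hν₂ : 0 < ν₂)
    (hηpos : 0 < η) (hηA : η * ‖A‖ ^ 2 ≤ η₀) (hηle : η ≤ η₁)
    {z : EuclideanSpace ℝ (Fin n)} (hz : A z = v) {R : ℝ}
    {u : EuclideanSpace ℝ (Fin n)} (hu : ‖u - z‖ ≤ R) :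
    ‖irmglStep g σ A η₀ η₁ ν₀ ν₁ ν₂ v u - z‖ ^ 2 ≤
      ‖u - z‖ ^ 2 + (2 * ν₀ * R + 2 * (η₀ * η₁ + ν₀ * ν₁)) * ‖A u - v‖ ^ 2 := by
  have hm := step_master (g := g) (σ := σ) hη₀ hη₁ hν₀ hν₁ hν₂ hηpos hηA hηle hz v u
    le_rfl (by simp)
  have h3 : 2 * ν₀ * (‖u - z‖ * ‖A u - v‖ ^ 2) ≤ 2 * ν₀ * (R * ‖A u - v‖ ^ 2) :=
    mul_le_mul_of_nonneg_left
      (mul_le_mul_of_nonneg_right hu (sq_nonneg _)) (by positivity)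
  nlinarith [hm, h3, sq_nonneg ‖A u - v‖, mul_nonneg hηpos.le (sq_nonneg ‖A u - v‖)]

/-- Solutions are fixed points of the exact-data step. -/
lemma step_fixed (hν₁ : 0 < ν₁) (hν₂ : 0 < ν₂)
    {u : EuclideanSpace ℝ (Fin n)} (hu : A u = v) :
    irmglStep g σ A η₀ η₁ ν₀ ν₁ ν₂ v u = u := by
  have h0 : A u - v = 0 := sub_eq_zero.2 hu
  have hβ : betaStep g σ A ν₀ ν₁ ν₂ v u • lapCLM g σ u u = 0 := by
    unfold betaStep
    split_ifs with h
    · have hb : 0 < ‖lapCLM g σ u u‖ := norm_pos_iff.2 h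
      rw [h0, norm_zero]
      have h1 : ν₀ * (0:ℝ) ^ 2 / ‖lapCLM g σ u u‖ = 0 := by simp
      rw [h1, min_eq_left (show (0:ℝ) ≤ ν₁ / ‖lapCLM g σ u u‖ by positivity),
        min_eq_left hν₂.le, zero_smul]
    · simp
  simp only [irmglStep, hβ, h0, map_zero, smul_zero, sub_zero]

lemma tendsto_alpha_smul {E : Type*} [NormedAddCommGroup E] [NormedSpace ℝ E]
    (hη₀ : 0 < η₀) (hη₁ : 0 < η₁) {aj : ℕ → E} {dj : ℕ → ℝ} {a : E} {d : ℝ}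
    (hdj : ∀ j, 0 ≤ dj j)
    (ha : Tendsto aj atTop (nhds a)) (hd : Tendsto dj atTop (nhds d)) :
    Tendsto (fun j => (if aj j ≠ 0 then min (η₀ * dj j / ‖aj j‖ ^ 2) η₁ else η₁) • aj j)
      atTop (nhds ((if a ≠ 0 then min (η₀ * d / ‖a‖ ^ 2) η₁ else η₁) • a)) := by
  by_cases h : a = 0
  · subst h
    rw [smul_zero]
    apply squeeze_zero_norm (a := fun j => η₁ * ‖aj j‖)
    · intro j
      rw [norm_smul, Real.norm_eq_abs]
      refine mul_le_mul_of_nonneg_right ?_ (norm_nonneg _)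
      split_ifs with hj
      · rw [abs_of_nonneg (le_min (div_nonneg (mul_nonneg hη₀.le (hdj j)) (sq_nonneg _)) hη₁.le)]
        exact min_le_right _ _
      · rw [abs_of_nonneg hη₁.le]
    · have := ha.norm
      rw [norm_zero] at this
      simpa using (tendsto_const_nhds (x := η₁)).mul this
  · have hna : 0 < ‖a‖ := norm_pos_iff.2 h
    have hev : ∀ᶠ j in atTop, aj j ≠ 0 := by
      filter_upwards [ha.norm.eventually (eventually_gt_nhds hna)] with j hj
      exact norm_pos_iff.1 hj
    have T : Tendsto (fun j => min (η₀ * dj j / ‖aj j‖ ^ 2) η₁ • aj j) atTop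
        (nhds (min (η₀ * d / ‖a‖ ^ 2) η₁ • a)) := by
      refine Tendsto.smul (Tendsto.min ?_ tendsto_const_nhds) ha
      exact ((tendsto_const_nhds.mul hd).div (ha.norm.pow 2) (pow_ne_zero 2 hna.ne'))
    rw [if_pos h]
    exact Tendsto.congr' (hev.mono fun j hj => by simp [hj]) T

lemma tendsto_beta_smul {E : Type*} [NormedAddCommGroup E] [NormedSpace ℝ E]
    (hν₀ : 0 < ν₀) (hν₁ : 0 < ν₁) (hν₂ : 0 < ν₂) {bj : ℕ → E} {dj : ℕ → ℝ} {b : E} {d : ℝ}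
    (hdj : ∀ j, 0 ≤ dj j)
    (hb : Tendsto bj atTop (nhds b)) (hd : Tendsto dj atTop (nhds d)) :
    Tendsto (fun j =>
        (if bj j ≠ 0 then min (min (ν₀ * dj j / ‖bj j‖) (ν₁ / ‖bj j‖)) ν₂ else 0) • bj j)
      atTop
      (nhds ((if b ≠ 0 then min (min (ν₀ * d / ‖b‖) (ν₁ / ‖b‖)) ν₂ else 0) • b)) := by
  by_cases h : b = 0
  · subst h
    rw [smul_zero]
    apply squeeze_zero_norm (a := fun j => ν₂ * ‖bj j‖)
    · intro j
      rw [norm_smul, Real.norm_eq_abs]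
      refine mul_le_mul_of_nonneg_right ?_ (norm_nonneg _)
      split_ifs with hj
      · have hbj : 0 < ‖bj j‖ := norm_pos_iff.2 hj
        rw [abs_of_nonneg (le_min (le_min (div_nonneg (mul_nonneg hν₀.le (hdj j)) (norm_nonneg _)) (div_nonneg hν₁.le (norm_nonneg _))) hν₂.le)]
        exact min_le_right _ _
      · simpa using hν₂.le
    · have := hb.norm
      rw [norm_zero] at this
      simpa using (tendsto_const_nhds (x := ν₂)).mul this
  · have hnb : 0 < ‖b‖ := norm_pos_iff.2 h
    have hev : ∀ᶠ j in atTop, bj j ≠ 0 := by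
      filter_upwards [hb.norm.eventually (eventually_gt_nhds hnb)] with j hj
      exact norm_pos_iff.1 hj
    have T : Tendsto (fun j => min (min (ν₀ * dj j / ‖bj j‖) (ν₁ / ‖bj j‖)) ν₂ • bj j) atTop
        (nhds (min (min (ν₀ * d / ‖b‖) (ν₁ / ‖b‖)) ν₂ • b)) := by
      refine Tendsto.smul (Tendsto.min (Tendsto.min ?_ ?_) tendsto_const_nhds) hb
      · exact ((tendsto_const_nhds.mul hd).div hb.norm hnb.ne')
      · exact (tendsto_const_nhds.div hb.norm hnb.ne')
    rw [if_pos h]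
    exact Tendsto.congr' (hev.mono fun j hj => by simp [hj]) T

lemma coord_cont (a : Fin n) : Continuous fun u : EuclideanSpace ℝ (Fin n) => u a :=
  (continuous_apply a).comp (EuclideanSpace.equiv (Fin n) ℝ).continuous

lemma wEntry_cont (a b : Fin n) : Continuous fun u : EuclideanSpace ℝ (Fin n) =>
    wMat g σ u a b := by
  simp only [wMat, Matrix.of_apply]
  exact continuous_const.mul (Real.continuous_exp.comp
    (((((coord_cont a).sub (coord_cont b)).pow 2).neg).div_const σ))

lemma lapEntry_cont (a b : Fin n) : Continuous fun u : EuclideanSpace ℝ (Fin n) =>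
    lapMat g σ u a b := by
  simp only [lapMat, Matrix.sub_apply, Matrix.diagonal_apply]
  refine Continuous.sub ?_ (wEntry_cont a b)
  by_cases h : a = b
  · simp only [if_pos h]
    unfold degFun
    exact continuous_finset_sum _ fun c _ => wEntry_cont a c
  · simp only [if_neg h]
    exact continuous_const

lemma lap_cont : Continuous fun u : EuclideanSpace ℝ (Fin n) => lapCLM g σ u u := by
  have h1 : Continuous fun u : EuclideanSpace ℝ (Fin n) =>
      ((lapMat g σ u).mulVec fun b => u b) := by
    apply continuous_pi
    intro a
    simp only [Matrix.mulVec, dotProduct]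
    exact continuous_finset_sum _ fun b _ => (lapEntry_cont a b).mul (coord_cont b)
  have h2 : (fun u : EuclideanSpace ℝ (Fin n) => lapCLM g σ u u) =
      fun u => (EuclideanSpace.equiv (Fin n) ℝ).symm ((lapMat g σ u).mulVec fun b => u b) :=
    rfl
  rw [h2]
  exact (EuclideanSpace.equiv (Fin n) ℝ).symm.continuous.comp h1

lemma tendsto_step (hη₀ : 0 < η₀) (hη₁ : 0 < η₁) (hν₀ : 0 < ν₀) (hν₁ : 0 < ν₁) (hν₂ : 0 < ν₂)
    {wj : ℕ → EuclideanSpace ℝ (Fin m)} {xj : ℕ → EuclideanSpace ℝ (Fin n)}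
    {w : EuclideanSpace ℝ (Fin m)} {x : EuclideanSpace ℝ (Fin n)}
    (hw : Tendsto wj atTop (nhds w)) (hx : Tendsto xj atTop (nhds x)) :
    Tendsto (fun j => irmglStep g σ A η₀ η₁ ν₀ ν₁ ν₂ (wj j) (xj j)) atTop
      (nhds (irmglStep g σ A η₀ η₁ ν₀ ν₁ ν₂ w x)) := by
  have hr : Tendsto (fun j => A (xj j) - wj j) atTop (nhds (A x - w)) :=
    ((A.continuous.tendsto x).comp hx).sub hw
  have ha : Tendsto (fun j => adjoint A (A (xj j) - wj j)) atTop
      (nhds (adjoint A (A x - w))) := ((adjoint A).continuous.tendsto _).comp hr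
  have hb : Tendsto (fun j => lapCLM g σ (xj j) (xj j)) atTop (nhds (lapCLM g σ x x)) :=
    ((lap_cont (g := g) (σ := σ)).tendsto x).comp hx
  have hd : Tendsto (fun j => ‖A (xj j) - wj j‖ ^ 2) atTop (nhds (‖A x - w‖ ^ 2)) :=
    hr.norm.pow 2
  have hA : Tendsto (fun j => alphaStep A η₀ η₁ (wj j) (xj j) •
      adjoint A (A (xj j) - wj j)) atTop
      (nhds (alphaStep A η₀ η₁ w x • adjoint A (A x - w))) := by
    simp only [alphaStep]
    convert tendsto_alpha_smul (E := EuclideanSpace ℝ (Fin n)) (aj := fun j => adjoint A (A (xj j) - wj j))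
      (dj := fun j => ‖A (xj j) - wj j‖ ^ 2) hη₀ hη₁ (fun j => sq_nonneg _) ha hd
    rfl
  have hB : Tendsto (fun j => betaStep g σ A ν₀ ν₁ ν₂ (wj j) (xj j) •
      lapCLM g σ (xj j) (xj j)) atTop
      (nhds (betaStep g σ A ν₀ ν₁ ν₂ w x • lapCLM g σ x x)) := by
    simp only [betaStep]
    convert tendsto_beta_smul (E := EuclideanSpace ℝ (Fin n)) (bj := fun j => lapCLM g σ (xj j) (xj j))
      (dj := fun j => ‖A (xj j) - wj j‖ ^ 2) hν₀ hν₁ hν₂ (fun j => sq_nonneg _) hb hd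
    rfl
  simp only [irmglStep]
  exact (hx.sub hA).sub hB

lemma tendsto_seq (hη₀ : 0 < η₀) (hη₁ : 0 < η₁) (hν₀ : 0 < ν₀) (hν₁ : 0 < ν₁) (hν₂ : 0 < ν₂)
    {vj : ℕ → EuclideanSpace ℝ (Fin m)} {u₀j : ℕ → EuclideanSpace ℝ (Fin n)}
    {v : EuclideanSpace ℝ (Fin m)} {u₀ : EuclideanSpace ℝ (Fin n)}
    (hv : Tendsto vj atTop (nhds v)) (hu : Tendsto u₀j atTop (nhds u₀)) (k : ℕ) :
    Tendsto (fun j => irmglSeq g σ A η₀ η₁ ν₀ ν₁ ν₂ (vj j) (u₀j j) k) atTop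
      (nhds (irmglSeq g σ A η₀ η₁ ν₀ ν₁ ν₂ v u₀ k)) := by
  induction k with
  | zero => simpa [irmglSeq] using hu
  | succ k ih =>
      have := tendsto_step (g := g) (σ := σ) (A := A) hη₀ hη₁ hν₀ hν₁ hν₂ hv ih
      simpa [irmglSeq] using this

lemma seq_stationary (hν₁ : 0 < ν₁) (hν₂ : 0 < ν₂) {u₀ : EuclideanSpace ℝ (Fin n)} {K : ℕ}
    (hK : A (irmglSeq g σ A η₀ η₁ ν₀ ν₁ ν₂ v u₀ K) = v) :
    ∀ k, K ≤ k → irmglSeq g σ A η₀ η₁ ν₀ ν₁ ν₂ v u₀ k =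
      irmglSeq g σ A η₀ η₁ ν₀ ν₁ ν₂ v u₀ K := by
  intro k hk
  induction k, hk using Nat.le_induction with
  | base => rfl
  | succ k hk ih =>
      show irmglStep g σ A η₀ η₁ ν₀ ν₁ ν₂ v (irmglSeq g σ A η₀ η₁ ν₀ ν₁ ν₂ v u₀ k) = _
      rw [ih, step_fixed hν₁ hν₂ hK]

set_option maxHeartbeats 1000000 in
lemma exact_converges (hη₀ : 0 < η₀) (hη₁ : 0 < η₁) (hν₀ : 0 < ν₀) (hν₁ : 0 < ν₁)
    (hν₂ : 0 < ν₂) (hηpos : 0 < η) (hηA : η * ‖A‖ ^ 2 ≤ η₀) (hηle : η ≤ η₁) (hp : 0 < p)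
    (hC₀def : C₀ = η - ν₀ * (p + ν₁) - η₀ * η₁) (hC₀ : 0 < C₀)
    {udag u₀ : EuclideanSpace ℝ (Fin n)} (hz : A udag = v) (hu₀ : ‖u₀ - udag‖ ≤ p) :
    ∃ uhat, A uhat = v ∧ ‖uhat - udag‖ ≤ p ∧
      Tendsto (fun k => irmglSeq g σ A η₀ η₁ ν₀ ν₁ ν₂ v u₀ k) atTop (nhds uhat) := by
  set ub : ℕ → EuclideanSpace ℝ (Fin n) := irmglSeq g σ A η₀ η₁ ν₀ ν₁ ν₂ v u₀ with hub
  set dd : ℕ → ℝ := fun k => ‖A (ub k) - v‖ ^ 2 with hdd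
  set S : ℕ → ℝ := fun k => ∑ i ∈ Finset.range k, dd i with hS
  have hdd0 : ∀ k, 0 ≤ dd k := fun k => sq_nonneg _
  have hS0 : ∀ k, 0 ≤ S k := fun k => Finset.sum_nonneg fun i _ => hdd0 i
  have hmain : ∀ k, ‖ub k - udag‖ ≤ p ∧ ‖ub k - udag‖ ^ 2 + 2 * C₀ * S k ≤ p ^ 2 := by
    intro k
    induction k with
    | zero =>
        refine ⟨hu₀, ?_⟩
        simp only [hS, Finset.range_zero, Finset.sum_empty, mul_zero, add_zero]
        exact pow_le_pow_left₀ (norm_nonneg _) hu₀ 2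
    | succ k ih =>
        have hse := step_exact (g := g) (σ := σ) hη₀ hη₁ hν₀ hν₁ hν₂ hηpos hηA hηle hp
          hC₀def hz (u := ub k) ih.1
        have hs1 : ub (k + 1) = irmglStep g σ A η₀ η₁ ν₀ ν₁ ν₂ v (ub k) := rfl
        have hs2 : S (k + 1) = S k + dd k := by
          simp only [hS, Finset.sum_range_succ]
        have h2 : ‖ub (k + 1) - udag‖ ^ 2 + 2 * C₀ * S (k + 1) ≤ p ^ 2 := by
          rw [hs1, hs2]
          have hdk : dd k = ‖A (ub k) - v‖ ^ 2 := rfl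
          nlinarith [hse, ih.2, hdk]
        refine ⟨?_, h2⟩
        have : ‖ub (k + 1) - udag‖ ^ 2 ≤ p ^ 2 := by
          nlinarith [hS0 (k + 1), h2]
        exact le_of_pow_le_pow_left₀ two_ne_zero hp.le this
  have hSmono : Monotone S := monotone_nat_of_le_succ fun k => by
    simp only [hS, Finset.sum_range_succ]
    linarith [hdd0 k]
  have hSbdd : BddAbove (Set.range S) := by
    refine ⟨p ^ 2 / (2 * C₀), ?_⟩
    rintro x ⟨k, rfl⟩
    rw [le_div_iff₀ (by positivity)]
    nlinarith [(hmain k).2, sq_nonneg ‖ub k - udag‖]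
  have hSlim : Tendsto S atTop (nhds (⨆ k, S k)) := tendsto_atTop_ciSup hSmono hSbdd
  set L := ⨆ k, S k with hL
  have hSle : ∀ k, S k ≤ L := fun k => hSmono.ge_of_tendsto hSlim k
  have hddlim : Tendsto dd atTop (nhds 0) := by
    have h1 : Tendsto (fun k => S (k + 1) - S k) atTop (nhds (L - L)) :=
      (hSlim.comp (tendsto_add_atTop_nat 1)).sub hSlim
    rw [sub_self] at h1
    refine h1.congr fun k => ?_
    simp [hS, Finset.sum_range_succ]
  have hball : ∀ k, ub k ∈ Metric.closedBall udag p := fun k => by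
    rw [Metric.mem_closedBall, dist_eq_norm]
    exact (hmain k).1
  obtain ⟨uhat, hmem, φ, hφ, hφt⟩ :=
    (isCompact_closedBall udag p).tendsto_subseq hball
  have huhat_ball : ‖uhat - udag‖ ≤ p := by
    rw [Metric.mem_closedBall, dist_eq_norm] at hmem
    exact hmem
  have hAuhat : A uhat = v := by
    have h1 : Tendsto (fun i => dd (φ i)) atTop (nhds (‖A uhat - v‖ ^ 2)) :=
      (((A.continuous.tendsto _).comp hφt).sub tendsto_const_nhds).norm.pow 2
    have h2 : Tendsto (fun i => dd (φ i)) atTop (nhds 0) :=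
      hddlim.comp hφ.tendsto_atTop
    have h3 : ‖A uhat - v‖ ^ 2 = 0 := tendsto_nhds_unique h1 h2
    rw [pow_eq_zero_iff two_ne_zero, norm_eq_zero, sub_eq_zero] at h3
    exact h3
  have hRd : ∀ k, ‖ub k - uhat‖ ≤ 2 * p := by
    intro k
    calc ‖ub k - uhat‖ = ‖(ub k - udag) + (udag - uhat)‖ := by rw [sub_add_sub_cancel]
      _ ≤ ‖ub k - udag‖ + ‖udag - uhat‖ := norm_add_le _ _
      _ ≤ p + p := by
          refine add_le_add (hmain k).1 ?_
          rw [norm_sub_rev]; exact huhat_ball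
      _ = 2 * p := by ring
  set M : ℝ := 2 * ν₀ * (2 * p) + 2 * (η₀ * η₁ + ν₀ * ν₁) with hM
  have hM0 : 0 ≤ M := by positivity
  have hgrow : ∀ k l, k ≤ l → ‖ub l - uhat‖ ^ 2 ≤ ‖ub k - uhat‖ ^ 2 + M * (S l - S k) := by
    intro k l hkl
    induction l, hkl using Nat.le_induction with
    | base => simp
    | succ l hl ih =>
        have hc := step_crude (g := g) (σ := σ) hη₀ hη₁ hν₀ hν₁ hν₂ hηpos hηA hηle hAuhat
          (R := 2 * p) (u := ub l) (hRd l)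
        have hs1 : ub (l + 1) = irmglStep g σ A η₀ η₁ ν₀ ν₁ ν₂ v (ub l) := rfl
        have hs2 : S (l + 1) = S l + dd l := by simp [hS, Finset.sum_range_succ]
        rw [hs1, hs2]
        have : (2 * ν₀ * (2 * p) + 2 * (η₀ * η₁ + ν₀ * ν₁)) * ‖A (ub l) - v‖ ^ 2
            = M * dd l := by rw [hM, hdd]
        nlinarith [hc, ih]
  refine ⟨uhat, hAuhat, huhat_ball, ?_⟩
  refine Metric.tendsto_atTop.2 fun ε hε => ?_
  have hA1 : Tendsto (fun i => ‖ub (φ i) - uhat‖ ^ 2) atTop (nhds 0) := by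
    have := (tendsto_iff_norm_sub_tendsto_zero.1 hφt).pow 2
    simpa using this
  have hA2 : Tendsto (fun i => M * (L - S (φ i))) atTop (nhds 0) := by
    have h1 : Tendsto (fun i => L - S (φ i)) atTop (nhds (L - L)) :=
      tendsto_const_nhds.sub (hSlim.comp hφ.tendsto_atTop)
    rw [sub_self] at h1
    simpa using tendsto_const_nhds.mul h1
  have hsum : Tendsto (fun i => ‖ub (φ i) - uhat‖ ^ 2 + M * (L - S (φ i))) atTop (nhds 0) := by
    simpa using hA1.add hA2
  have hev : ∀ᶠ i in atTop, ‖ub (φ i) - uhat‖ ^ 2 + M * (L - S (φ i)) < ε ^ 2 :=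
    hsum.eventually (eventually_lt_nhds (by positivity))
  obtain ⟨i, hi⟩ := hev.exists
  refine ⟨φ i, fun l hl => ?_⟩
  rw [dist_eq_norm]
  have h1 : ‖ub l - uhat‖ ^ 2 ≤ ‖ub (φ i) - uhat‖ ^ 2 + M * (S l - S (φ i)) :=
    hgrow (φ i) l hl
  have h2 : M * (S l - S (φ i)) ≤ M * (L - S (φ i)) :=
    mul_le_mul_of_nonneg_left (by linarith [hSle l]) hM0
  have h3 : ‖ub l - uhat‖ ^ 2 < ε ^ 2 := by linarith
  exact lt_of_pow_lt_pow_left₀ 2 hε.le h3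


end Stmt12Aux
end

set_option maxHeartbeats 1000000 in
lemma traj_mono {n m : ℕ} {g : Fin n → Fin n → ℝ} {σ : ℝ}
    {A : EuclideanSpace ℝ (Fin n) →L[ℝ] EuclideanSpace ℝ (Fin m)}
    {η₀ η₁ ν₀ ν₁ ν₂ η τ p C : ℝ} {v : EuclideanSpace ℝ (Fin m)}
    (hη₀ : 0 < η₀) (hη₁ : 0 < η₁) (hν₀ : 0 < ν₀) (hν₁ : 0 < ν₁) (hν₂ : 0 < ν₂)
    (hηpos : 0 < η) (hηA : η * ‖A‖ ^ 2 ≤ η₀) (hηle : η ≤ η₁) (hτ : 1 < τ) (hp : 0 < p)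
    (hCdef : C = η - η₁ / τ - ν₀ * (p + ν₁) - η₀ * η₁) (hC : 0 < C)
    {z : EuclideanSpace ℝ (Fin n)} (hz : A z = v)
    {w : EuclideanSpace ℝ (Fin m)} {δ' : ℝ} (hδ'0 : 0 ≤ δ') (hw : ‖w - v‖ ≤ δ')
    {u₀' : EuclideanSpace ℝ (Fin n)} {kstop : ℕ}
    (hdisc : ∀ k < kstop, τ * δ' < ‖A (irmglSeq g σ A η₀ η₁ ν₀ ν₁ ν₂ w u₀' k) - w‖)
    {ρ : ℝ} (hρ : ρ ≤ p) {K : ℕ}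
    (hK : ‖irmglSeq g σ A η₀ η₁ ν₀ ν₁ ν₂ w u₀' K - z‖ ≤ ρ) :
    ∀ k, K ≤ k → k ≤ kstop → ‖irmglSeq g σ A η₀ η₁ ν₀ ν₁ ν₂ w u₀' k - z‖ ≤ ρ := by
  intro k hKk
  induction k, hKk using Nat.le_induction with
  | base => exact fun _ => hK
  | succ k hk ih =>
      intro hk1
      have hklt : k < kstop := Nat.lt_of_succ_le hk1
      have h1 := ih hklt.le
      have hs : irmglSeq g σ A η₀ η₁ ν₀ ν₁ ν₂ w u₀' (k + 1) =
          irmglStep g σ A η₀ η₁ ν₀ ν₁ ν₂ w (irmglSeq g σ A η₀ η₁ ν₀ ν₁ ν₂ w u₀' k) := rfl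
      rw [hs]
      refine le_trans (Stmt12Aux.step_mono hη₀ hη₁ hν₀ hν₁ hν₂ hηpos hηA hηle hτ hp
        hCdef hC hz hδ'0 hw (le_of_lt (hdisc k hklt)) (h1.trans hρ)) h1

set_option maxHeartbeats 2000000 in
/-- Regularization property of IRMGL under the discrepancy principle. -/
theorem stmt12 (n m : ℕ) (g : Fin n → Fin n → ℝ) (σ : ℝ) (hσ : 0 < σ)
    (hgsymm : ∀ a b, g a b = g b a) (hgnn : ∀ a b, 0 ≤ g a b) (hgdiag : ∀ a, g a a = 0)
    (A : EuclideanSpace ℝ (Fin n) →L[ℝ] EuclideanSpace ℝ (Fin m))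
    (η₀ η₁ ν₀ ν₁ ν₂ τ p η : ℝ)
    (hη₀ : 0 < η₀) (hη₁ : 0 < η₁) (hν₀ : 0 < ν₀) (hν₁ : 0 < ν₁) (hν₂ : 0 < ν₂)
    (hτ : 1 < τ) (hp : 0 < p) (hηpos : 0 < η) (hηle : η ≤ min (η₀ / ‖A‖ ^ 2) η₁)
    (udag : EuclideanSpace ℝ (Fin n)) (v : EuclideanSpace ℝ (Fin m)) (hsol : A udag = v)
    (C : ℝ) (hCdef : C = η - η₁ / τ - ν₀ * (p + ν₁) - η₀ * η₁) (hC : 0 < C)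
    (C₀ : ℝ) (hC₀def : C₀ = η - ν₀ * (p + ν₁) - η₀ * η₁) (hC₀ : 0 < C₀)
    (δ : ℕ → ℝ) (hδpos : ∀ j, 0 < δ j) (hδ : Tendsto δ atTop (nhds 0))
    (vj : ℕ → EuclideanSpace ℝ (Fin m)) (hvj : ∀ j, ‖vj j - v‖ ≤ δ j)
    (u₀ : EuclideanSpace ℝ (Fin n)) (hu₀ : ‖u₀ - udag‖ ≤ p)
    (u₀j : ℕ → EuclideanSpace ℝ (Fin n)) (hu₀j : Tendsto u₀j atTop (nhds u₀))
    (hu₀jball : ∀ j, ‖u₀j j - udag‖ ≤ p)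
    (kj : ℕ → ℕ)
    (hkj : ∀ j, ‖A (irmglSeq g σ A η₀ η₁ ν₀ ν₁ ν₂ (vj j) (u₀j j) (kj j)) - vj j‖
        ≤ τ * δ j ∧
      ∀ k < kj j, τ * δ j < ‖A (irmglSeq g σ A η₀ η₁ ν₀ ν₁ ν₂ (vj j) (u₀j j) k) - vj j‖) :
    ∃ uhat : EuclideanSpace ℝ (Fin n), A uhat = v ∧
      Tendsto (fun j => irmglSeq g σ A η₀ η₁ ν₀ ν₁ ν₂ (vj j) (u₀j j) (kj j)) atTop
        (nhds uhat) := by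
  -- basic consequences of the step-size hypotheses
  have hηle' : η ≤ η₁ := hηle.trans (min_le_right _ _)
  have hηA : η * ‖A‖ ^ 2 ≤ η₀ := by
    have h1 : η ≤ η₀ / ‖A‖ ^ 2 := hηle.trans (min_le_left _ _)
    by_cases hA0 : ‖A‖ = 0
    · rw [hA0]
      simpa using hη₀.le
    · have : 0 < ‖A‖ ^ 2 := by positivity
      exact (le_div_iff₀ this).1 h1
  have hv : Tendsto vj atTop (nhds v) := by
    rw [tendsto_iff_norm_sub_tendsto_zero]
    exact squeeze_zero_norm (fun j => by simpa using hvj j) hδ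
  -- noise-free iterates and their limit
  set ub : ℕ → EuclideanSpace ℝ (Fin n) := irmglSeq g σ A η₀ η₁ ν₀ ν₁ ν₂ v u₀ with hub
  obtain ⟨uhat, hAuhat, huhat_ball, hconv⟩ :=
    Stmt12Aux.exact_converges (g := g) (σ := σ) hη₀ hη₁ hν₀ hν₁ hν₂ hηpos hηA hηle' hp
      hC₀def hC₀ hsol hu₀
  -- stability of the iterates
  have hstab : ∀ k, Tendsto (fun j => irmglSeq g σ A η₀ η₁ ν₀ ν₁ ν₂ (vj j) (u₀j j) k)
      atTop (nhds (ub k)) := fun k =>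
    Stmt12Aux.tendsto_seq (g := g) (σ := σ) (A := A) hη₀ hη₁ hν₀ hν₁ hν₂ hv hu₀j k
  refine ⟨uhat, hAuhat, ?_⟩
  apply tendsto_of_subseq_tendsto
  intro ns hns
  by_cases hbdd : BddAbove (Set.range fun i => kj (ns i))
  · -- bounded stopping indices along the subsequence: some index value occurs infinitely often
    obtain ⟨N, hN⟩ := hbdd
    have hNfun : ∀ i, kj (ns i) ≤ N := fun i => hN ⟨i, rfl⟩
    have hinf : ∃ K' , {i | kj (ns i) = K'}.Infinite := by
      by_contra hcon
      push_neg at hcon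
      have hfin : ∀ K', {i | kj (ns i) = K'}.Finite :=
        fun K' => hcon K'
      have hsub : (Set.univ : Set ℕ) ⊆
          ⋃ K' ∈ Finset.range (N + 1), {i | kj (ns i) = K'} := by
        intro i _
        simp only [Set.mem_iUnion, Finset.mem_range]
        exact ⟨kj (ns i), Nat.lt_succ_of_le (hNfun i), rfl⟩
      have : (Set.univ : Set ℕ).Finite :=
        Set.Finite.subset (Set.Finite.biUnion (Finset.range (N + 1)).finite_toSet
          fun K' _ => hfin K') hsub
      exact Set.infinite_univ this
    obtain ⟨K', hK'⟩ := hinf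
    obtain ⟨φ, hφmono, hφ⟩ :=
      Filter.extraction_of_frequently_atTop (Nat.frequently_atTop_iff_infinite.2 hK')
    have hsub : Tendsto (fun i => ns (φ i)) atTop atTop := hns.comp hφmono.tendsto_atTop
    have h1 : Tendsto (fun i => irmglSeq g σ A η₀ η₁ ν₀ ν₁ ν₂ (vj (ns (φ i)))
        (u₀j (ns (φ i))) K') atTop (nhds (ub K')) := (hstab K').comp hsub
    -- the limit `ub K'` is a solution
    have hubK' : A (ub K') = v := by
      have hle : ∀ i, ‖A (irmglSeq g σ A η₀ η₁ ν₀ ν₁ ν₂ (vj (ns (φ i)))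
          (u₀j (ns (φ i))) K') - vj (ns (φ i))‖ ≤ τ * δ (ns (φ i)) := by
        intro i
        have := (hkj (ns (φ i))).1
        rwa [hφ i] at this
      have hL : Tendsto (fun i => ‖A (irmglSeq g σ A η₀ η₁ ν₀ ν₁ ν₂ (vj (ns (φ i)))
          (u₀j (ns (φ i))) K') - vj (ns (φ i))‖) atTop (nhds (‖A (ub K') - v‖)) :=
        (((A.continuous.tendsto _).comp h1).sub (hv.comp hsub)).norm
      have hR : Tendsto (fun i => τ * δ (ns (φ i))) atTop (nhds 0) := by
        simpa using tendsto_const_nhds.mul (hδ.comp hsub)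
      have := le_of_tendsto_of_tendsto' hL hR hle
      have h0 : ‖A (ub K') - v‖ = 0 := le_antisymm this (norm_nonneg _)
      rwa [norm_eq_zero, sub_eq_zero] at h0
    -- hence the noise-free iteration is stationary from `K'` on and `uhat = ub K'`
    have hstat := Stmt12Aux.seq_stationary (g := g) (σ := σ) (A := A) (η₀ := η₀) (η₁ := η₁)
      (ν₀ := ν₀) hν₁ hν₂ (u₀ := u₀) (K := K') hubK'
    have huhatK : uhat = ub K' := by
      have h2 : Tendsto ub atTop (nhds (ub K')) := by
        apply Tendsto.congr' _ (tendsto_const_nhds (x := ub K'))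
        filter_upwards [eventually_ge_atTop K'] with k hk
        exact (hstat k hk).symm
      exact tendsto_nhds_unique hconv h2
    refine ⟨φ, ?_⟩
    rw [huhatK]
    refine h1.congr fun i => ?_
    rw [hφ i]
  · -- unbounded stopping indices: extract a subsequence along which they tend to infinity
    have hfreq : ∀ N, ∃ᶠ i in atTop, N ≤ kj (ns i) := by
      intro N
      rw [Filter.frequently_atTop]
      intro i₀
      obtain ⟨y, ⟨i, rfl⟩, hy⟩ := not_bddAbove_iff.1 hbdd
        (max N ((Finset.range i₀).sup fun i => kj (ns i)))
      have hi₀ : i₀ ≤ i := by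
        by_contra hcon
        push_neg at hcon
        have : kj (ns i) ≤ (Finset.range i₀).sup fun i => kj (ns i) :=
          Finset.le_sup (f := fun i => kj (ns i)) (Finset.mem_range.2 hcon)
        have hy' : (max N ((Finset.range i₀).sup fun i => kj (ns i))) < kj (ns i) := hy
        omega
      have hy' : (max N ((Finset.range i₀).sup fun i => kj (ns i))) < kj (ns i) := hy
      exact ⟨i, hi₀, le_of_lt (lt_of_le_of_lt (le_max_left _ _) hy')⟩
    obtain ⟨ms, hmsmono, hms⟩ := Filter.extraction_forall_of_frequently hfreq
    have hkjtop : Tendsto (fun i => kj (ns (ms i))) atTop atTop :=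
      tendsto_atTop_mono hms tendsto_id
    have hsub : Tendsto (fun i => ns (ms i)) atTop atTop := hns.comp hmsmono.tendsto_atTop
    refine ⟨ms, ?_⟩
    rw [Metric.tendsto_atTop]
    intro ε hε
    set ε' : ℝ := min (ε / 2) p with hε'def
    have hε' : 0 < ε' := lt_min (by positivity) hp
    -- choose K with ub K close to uhat
    obtain ⟨K, hK⟩ := Metric.tendsto_atTop.1 hconv (ε' / 2) (by positivity)
    have hK1 : ‖ub K - uhat‖ < ε' / 2 := by
      have := hK K le_rfl
      rwa [dist_eq_norm] at this
    -- stability at step K along the subsequence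
    have hK2 : Tendsto (fun i => irmglSeq g σ A η₀ η₁ ν₀ ν₁ ν₂ (vj (ns (ms i)))
        (u₀j (ns (ms i))) K) atTop (nhds (ub K)) := (hstab K).comp hsub
    obtain ⟨I₁, hI₁⟩ := Metric.tendsto_atTop.1 hK2 (ε' / 2) (by positivity)
    obtain ⟨I₂, hI₂⟩ := (hkjtop.eventually_ge_atTop K).exists_forall_of_atTop
    refine ⟨max I₁ I₂, fun i hi => ?_⟩
    have hi1 : I₁ ≤ i := le_trans (le_max_left _ _) hi
    have hi2 : I₂ ≤ i := le_trans (le_max_right _ _) hi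
    set j := ns (ms i) with hj
    have hKle : K ≤ kj j := hI₂ i hi2
    have hclose : ‖irmglSeq g σ A η₀ η₁ ν₀ ν₁ ν₂ (vj j) (u₀j j) K - uhat‖ ≤ ε' := by
      have ht := hI₁ i hi1
      rw [dist_eq_norm] at ht
      calc ‖irmglSeq g σ A η₀ η₁ ν₀ ν₁ ν₂ (vj j) (u₀j j) K - uhat‖
          = ‖(irmglSeq g σ A η₀ η₁ ν₀ ν₁ ν₂ (vj j) (u₀j j) K - ub K) + (ub K - uhat)‖ := by
            rw [sub_add_sub_cancel]
        _ ≤ ‖irmglSeq g σ A η₀ η₁ ν₀ ν₁ ν₂ (vj j) (u₀j j) K - ub K‖ + ‖ub K - uhat‖ :=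
            norm_add_le _ _
        _ ≤ ε' / 2 + ε' / 2 := add_le_add ht.le hK1.le
        _ = ε' := by ring
    have hfin := traj_mono hη₀ hη₁ hν₀ hν₁ hν₂ hηpos hηA hηle' hτ hp hCdef hC hAuhat
      (hδpos j).le (hvj j) (hkj j).2 (min_le_right (ε / 2) p) hclose (kj j) hKle le_rfl
    rw [dist_eq_norm]
    calc ‖irmglSeq g σ A η₀ η₁ ν₀ ν₁ ν₂ (vj j) (u₀j j) (kj j) - uhat‖ ≤ ε' := hfin
      _ ≤ ε / 2 := min_le_left _ _
      _ < ε := by linarith
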